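/- Let k be a field, S = k[x,y], and R = k + xS. Then the Krull dimension of R equals 2. -/

import Mathlib

open MvPolynomial
open scoped nonZeroDivisors
set_option synthInstance.maxHeartbeats 1000000
set_option maxHeartbeats 1600000

namespace Stmt4Aux

/-- Bezout identity with constant value for a prime polynomial and a non-multiple,
over a UFD (with normalization). -/
theorem bezout_const {A : Type*} [CommRing A] [IsDomain A] [NormalizedGCDMonoid A]
    {f g : Polynomial A} (hf : Prime f) (hg : g ≠ 0) (hfg : ¬ f ∣ g) :
    ∃ (u v : Polynomial A) (d : A), d ≠ 0 ∧ u * f + v * g = Polynomial.C d := by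
  by_cases h0 : f.natDegree = 0
  · obtain ⟨a, rfl⟩ := Polynomial.natDegree_eq_zero.mp h0
    refine ⟨1, 0, a, ?_, by ring⟩
    rintro rfl
    simp at hf
  · set K := FractionRing A
    set φ := algebraMap A K with hφ
    have hinj : Function.Injective φ := IsFractionRing.injective A K
    have hprim : f.IsPrimitive := by
      intro r hr
      obtain ⟨t, rfl⟩ := hr
      rcases hf.irreducible.isUnit_or_isUnit rfl with h | h
      · exact Polynomial.isUnit_C.mp h
      · exfalso
        apply h0
        have ht : t.natDegree = 0 := Polynomial.natDegree_eq_zero_of_isUnit h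
        have := Polynomial.natDegree_mul_le (p := Polynomial.C r) (q := t)
        simp [ht] at this
        omega
    have hirr : Irreducible (f.map φ) :=
      (hprim.irreducible_iff_irreducible_map_fraction_map (K := K)).mp hf.irreducible
    have hnd : ¬ f.map φ ∣ g.map φ := by
      rintro ⟨h, hh⟩
      obtain ⟨⟨c, hc0⟩, hc⟩ := IsLocalization.integerNormalization_map_to_map A⁰ h
      have hcc : c ≠ 0 := nonZeroDivisors.ne_zero hc0
      have key : Polynomial.C c * g = f * IsLocalization.integerNormalization A⁰ h := by
        apply Polynomial.map_injective φ hinj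
        rw [Polynomial.map_mul, Polynomial.map_mul, hc, Polynomial.map_C]
        rw [hh, Algebra.smul_def]
        push_cast
        ring_nf
        rw [Polynomial.algebraMap_apply]
        ring
      have hdvd : f ∣ Polynomial.C c * g := ⟨_, key⟩
      rcases (hf.dvd_mul).mp hdvd with h1 | h1
      · have := Polynomial.natDegree_le_of_dvd h1 (by simpa using hcc)
        simp at this
        exact h0 this
      · exact hfg h1
    have hcop : IsCoprime (f.map φ) (g.map φ) := by
      apply isCoprime_of_prime_dvd
      · rintro ⟨h1, -⟩
        exact hf.ne_zero (by simpa [Polynomial.map_eq_zero_iff hinj] using h1)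
      · intro z hz hzf hzg
        apply hnd
        obtain ⟨w, hw⟩ := hzf
        rcases hirr.isUnit_or_isUnit hw with h | h
        · exact absurd h hz.not_unit
        · obtain ⟨wu, rfl⟩ := h
          exact dvd_trans ⟨(wu⁻¹ : _), by rw [hw, mul_assoc, Units.mul_inv, mul_one]⟩ hzg
    obtain ⟨a, b, hab⟩ := hcop
    obtain ⟨⟨ca, hca0⟩, hca⟩ := IsLocalization.integerNormalization_map_to_map A⁰ a
    obtain ⟨⟨cb, hcb0⟩, hcb⟩ := IsLocalization.integerNormalization_map_to_map A⁰ b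
    refine ⟨Polynomial.C cb * IsLocalization.integerNormalization A⁰ a,
      Polynomial.C ca * IsLocalization.integerNormalization A⁰ b, ca * cb,
      mul_ne_zero (nonZeroDivisors.ne_zero hca0) (nonZeroDivisors.ne_zero hcb0), ?_⟩
    apply Polynomial.map_injective φ hinj
    rw [← hφ] at hca hcb
    simp only [Polynomial.map_add, Polynomial.map_mul, Polynomial.map_C, hca, hcb]
    rw [Algebra.smul_def, Algebra.smul_def]
    push_cast
    rw [Polynomial.algebraMap_apply, Polynomial.algebraMap_apply]
    rw [map_mul]
    have : (Polynomial.C (φ ca) * (Polynomial.C (φ cb))) * (a * f.map φ + b * g.map φ)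
        = Polynomial.C (φ ca) * Polynomial.C (φ cb) := by rw [hab, mul_one]
    calc Polynomial.C (φ cb) * (Polynomial.C (φ ca) * a) * f.map φ
          + Polynomial.C (φ ca) * (Polynomial.C (φ cb) * b) * g.map φ
        = (Polynomial.C (φ ca) * (Polynomial.C (φ cb))) * (a * f.map φ + b * g.map φ) := by ring
      _ = Polynomial.C (φ ca) * Polynomial.C (φ cb) := this
      _ = Polynomial.C (φ ca * φ cb) := by rw [Polynomial.C_mul]

theorem prime_map_equiv {A B : Type*} [CommRing A] [CommRing B] (e : A ≃+* B) {a : A}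
    (ha : Prime a) : Prime (e a) := by
  refine ⟨fun h => ha.ne_zero (by simpa using congrArg e.symm h), fun h => ha.not_unit ?_, ?_⟩
  · have := h.map e.symm.toRingHom
    simpa using this
  · intro x y hxy
    have : a ∣ e.symm x * e.symm y := by
      have := map_dvd e.symm.toRingHom hxy
      simpa using this
    rcases ha.2.2 _ _ this with h | h
    · left; have := map_dvd e.toRingHom h; simpa using this
    · right; have := map_dvd e.toRingHom h; simpa using this

variable (k : Type*) [Field k]

/-- The iso `k[x,y] ≃ (k[x])[y]` sending `X 0 ↦ C X`, `X 1 ↦ X`. -/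
noncomputable def Φ : MvPolynomial (Fin 2) k ≃ₐ[k] Polynomial (Polynomial k) :=
  (renameEquiv k (Equiv.swap 0 1)).trans <|
  (finSuccEquiv k 1).trans <|
  Polynomial.mapAlgEquiv <|
  (finSuccEquiv k 0).trans (Polynomial.mapAlgEquiv (isEmptyAlgEquiv k (Fin 0)))

theorem Φ_X0 : Φ k (X 0) = Polynomial.C Polynomial.X := by
  simp only [Φ, AlgEquiv.trans_apply, renameEquiv_apply, rename_X]
  rw [show (Equiv.swap (0 : Fin 2) 1) 0 = 1 from Equiv.swap_apply_left 0 1]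
  rw [show (1 : Fin 2) = Fin.succ 0 from rfl, finSuccEquiv_X_succ]
  simp [Polynomial.mapAlgEquiv, finSuccEquiv_X_zero]

theorem Φ_aeval (P : Polynomial k) :
    Φ k (Polynomial.aeval (X (0 : Fin 2)) P) = Polynomial.C P := by
  induction P using Polynomial.induction_on with
  | C a =>
    rw [Polynomial.aeval_C, AlgEquiv.commutes]
    simp [Polynomial.algebraMap_apply, MvPolynomial.algebraMap_eq]
  | add p q hp hq => rw [map_add, map_add, hp, hq, map_add]
  | monomial n a ih =>
    rw [pow_succ, ← mul_assoc, map_mul, map_mul, ih, Polynomial.aeval_X, Φ_X0, ← Polynomial.C_mul]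

theorem exists_prime_mem {A : Type*} [CommRing A] [IsDomain A] [UniqueFactorizationMonoid A]
    {q : Ideal A} (hq : q.IsPrime) (hbot : q ≠ ⊥) : ∃ f : A, Prime f ∧ f ∈ q := by
  classical
  obtain ⟨a, haq, ha0⟩ := Submodule.exists_mem_ne_zero_of_ne_bot hbot
  have hassoc := UniqueFactorizationMonoid.factors_prod ha0
  have hprodmem : (UniqueFactorizationMonoid.factors a).prod ∈ q := by
    obtain ⟨u, hu⟩ := hassoc.symm
    rw [← hu]
    exact Ideal.mul_mem_right _ _ haq
  have key : ∀ (s : Multiset A), (∀ b ∈ s, Prime b) → s.prod ∈ q → ∃ f ∈ s, f ∈ q := by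
    intro s
    induction s using Multiset.induction_on with
    | empty =>
      intro _ h1
      simp at h1
      exact absurd (Ideal.eq_top_iff_one _ |>.mpr h1) hq.ne_top
    | cons b s ih =>
      intro hpr hmem
      rw [Multiset.prod_cons] at hmem
      rcases hq.mem_or_mem hmem with h | h
      · exact ⟨b, Multiset.mem_cons_self b s, h⟩
      · obtain ⟨f, hf1, hf2⟩ := ih (fun c hc => hpr c (Multiset.mem_cons_of_mem hc)) h
        exact ⟨f, Multiset.mem_cons_of_mem hf1, hf2⟩
  obtain ⟨f, hf1, hf2⟩ := key _ (fun b hb => UniqueFactorizationMonoid.prime_of_factor b hb)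
    hprodmem
  exact ⟨f, UniqueFactorizationMonoid.prime_of_factor f hf1, hf2⟩

theorem exists_const_X0 {q1 q2 : Ideal (MvPolynomial (Fin 2) k)} (h1 : q1.IsPrime)
    (h2 : q2.IsPrime) (hbot : q1 ≠ ⊥) (hlt : q1 < q2) :
    ∃ d : Polynomial k, d ≠ 0 ∧ Polynomial.aeval (X (0 : Fin 2)) d ∈ q2 := by
  obtain ⟨f, hfp, hfq⟩ := exists_prime_mem h1 hbot
  obtain ⟨g, hg2, hg1⟩ := SetLike.exists_of_lt hlt
  have hg0 : g ≠ 0 := fun h => hg1 (h ▸ q1.zero_mem)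
  have hfg : ¬ f ∣ g := by
    rintro ⟨c, rfl⟩
    exact hg1 (Ideal.mul_mem_right _ _ hfq)
  have hfp' : Prime (Φ k f) := prime_map_equiv (Φ k).toRingEquiv hfp
  have hg0' : Φ k g ≠ 0 := fun h => hg0 (by simpa using congrArg (Φ k).symm h)
  have hfg' : ¬ Φ k f ∣ Φ k g := by
    rintro ⟨c, hc⟩
    apply hfg
    refine ⟨(Φ k).symm c, ?_⟩
    have := congrArg (Φ k).symm hc
    simpa using this
  letI := Classical.decEq k
  obtain ⟨u, v, d, hd0, heq⟩ := bezout_const hfp' hg0' hfg'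
  refine ⟨d, hd0, ?_⟩
  have : Polynomial.aeval (X (0 : Fin 2)) d = (Φ k).symm (u * Φ k f + v * Φ k g) := by
    rw [heq, ← Φ_aeval k d, AlgEquiv.symm_apply_apply]
  rw [this]
  have : (Φ k).symm (u * Φ k f + v * Φ k g)
      = (Φ k).symm u * f + (Φ k).symm v * g := by
    simp [map_add, map_mul]
  rw [this]
  exact Ideal.add_mem _ (Ideal.mul_mem_left _ _ (hlt.le hfq)) (Ideal.mul_mem_left _ _ hg2)

theorem exists_const_X1 {q1 q2 : Ideal (MvPolynomial (Fin 2) k)} (h1 : q1.IsPrime)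
    (h2 : q2.IsPrime) (hbot : q1 ≠ ⊥) (hlt : q1 < q2) :
    ∃ d : Polynomial k, d ≠ 0 ∧ Polynomial.aeval (X (1 : Fin 2)) d ∈ q2 := by
  let σ : MvPolynomial (Fin 2) k ≃ₐ[k] MvPolynomial (Fin 2) k :=
    renameEquiv k (Equiv.swap 0 1)
  let τ : MvPolynomial (Fin 2) k →+* MvPolynomial (Fin 2) k := σ.symm.toAlgHom.toRingHom
  have hτ : ∀ s, τ s = σ.symm s := fun s => rfl
  let q1' := Ideal.comap τ q1
  let q2' := Ideal.comap τ q2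
  haveI : q1.IsPrime := h1
  haveI : q2.IsPrime := h2
  have h1' : q1'.IsPrime := Ideal.IsPrime.comap τ
  have h2' : q2'.IsPrime := Ideal.IsPrime.comap τ
  have hbot' : q1' ≠ ⊥ := by
    obtain ⟨a, haq, ha0⟩ := Submodule.exists_mem_ne_zero_of_ne_bot hbot
    refine (Submodule.ne_bot_iff _).mpr ⟨σ a, ?_, fun h => ha0 (by simpa using congrArg σ.symm h)⟩
    show τ (σ a) ∈ q1
    rw [hτ]
    simpa using haq
  have hlt' : q1' < q2' := by
    rw [SetLike.lt_iff_le_and_exists]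
    refine ⟨Ideal.comap_mono hlt.le, ?_⟩
    obtain ⟨g, hg2, hg1⟩ := SetLike.exists_of_lt hlt
    refine ⟨σ g, ?_, ?_⟩
    · show τ (σ g) ∈ q2
      rw [hτ]; simpa using hg2
    · show ¬ τ (σ g) ∈ q1
      rw [hτ]; simpa using hg1
  obtain ⟨d, hd0, hdq⟩ := exists_const_X0 k h1' h2' hbot' hlt'
  refine ⟨d, hd0, ?_⟩
  have hmem : σ.symm (Polynomial.aeval (X (0 : Fin 2)) d) ∈ q2 := hdq
  have e1 : σ.symm (Polynomial.aeval (X (0 : Fin 2)) d)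
      = Polynomial.aeval (σ.symm (X (0 : Fin 2))) d :=
    (Polynomial.aeval_algHom_apply σ.symm (X 0) d).symm
  have e2 : σ.symm (X (0 : Fin 2)) = X 1 := by
    simp [σ, renameEquiv_symm, renameEquiv_apply, Equiv.symm_swap, rename_X]
  rwa [e1, e2] at hmem

theorem isMaximal_of_chain {q1 q2 : Ideal (MvPolynomial (Fin 2) k)} (h1 : q1.IsPrime)
    (h2 : q2.IsPrime) (hbot : q1 ≠ ⊥) (hlt : q1 < q2) : q2.IsMaximal := by
  haveI : q2.IsPrime := h2
  set D := MvPolynomial (Fin 2) k ⧸ q2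
  let mk : MvPolynomial (Fin 2) k →ₐ[k] D := Ideal.Quotient.mkₐ k q2
  obtain ⟨d, hd0, hdq⟩ := exists_const_X0 k h1 h2 hbot hlt
  obtain ⟨e, he0, heq⟩ := exists_const_X1 k h1 h2 hbot hlt
  have hint0 : IsIntegral k (mk (X 0)) := by
    refine (IsAlgebraic.isIntegral ⟨d, hd0, ?_⟩)
    rw [Polynomial.aeval_algHom_apply mk (X 0) d]
    exact Ideal.Quotient.eq_zero_iff_mem.mpr hdq
  have hint1 : IsIntegral k (mk (X 1)) := by
    refine (IsAlgebraic.isIntegral ⟨e, he0, ?_⟩)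
    rw [Polynomial.aeval_algHom_apply mk (X 1) e]
    exact Ideal.Quotient.eq_zero_iff_mem.mpr heq
  have hint : ∀ i : Fin 2, IsIntegral k (mk (X i)) := by
    intro i
    fin_cases i
    · exact hint0
    · exact hint1
  have hadj : Algebra.adjoin k (Set.range fun i : Fin 2 => mk (X i)) = ⊤ := by
    rw [eq_top_iff]
    intro z _
    obtain ⟨s, rfl⟩ := Ideal.Quotient.mkₐ_surjective k q2 z
    have hs : s ∈ Algebra.adjoin k (Set.range (X : Fin 2 → MvPolynomial (Fin 2) k)) := by
      rw [MvPolynomial.adjoin_range_X]; trivial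
    have := AlgHom.map_adjoin (Ideal.Quotient.mkₐ k q2) (Set.range (X : Fin 2 → _))
    have hmem : mk s ∈ Subalgebra.map mk (Algebra.adjoin k (Set.range X)) :=
      ⟨s, hs, rfl⟩
    rw [AlgHom.map_adjoin] at hmem
    refine Algebra.adjoin_mono ?_ hmem
    rintro t ⟨u, ⟨i, rfl⟩, rfl⟩
    exact ⟨i, rfl⟩
  haveI : Algebra.IsIntegral k D := by
    constructor
    intro z
    have hz : z ∈ Algebra.adjoin k (Set.range fun i : Fin 2 => mk (X i)) := by
      rw [hadj]; trivial
    have hle : Algebra.adjoin k (Set.range fun i : Fin 2 => mk (X i))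
        ≤ integralClosure k D := by
      rw [Algebra.adjoin_le_iff]
      rintro t ⟨i, rfl⟩
      exact hint i
    exact hle hz
  have hfield : IsField D := isField_of_isIntegral_of_isField' (Field.toIsField k)
  exact Ideal.Quotient.maximal_of_isField _ hfield

/-- The subalgebra `R = k + x·k[x,y]`. -/
noncomputable abbrev RS : Subalgebra k (MvPolynomial (Fin 2) k) :=
  Algebra.adjoin k {f : MvPolynomial (Fin 2) k | ∃ n : ℕ, f = X 0 * X 1 ^ n}

theorem X0_mem : (X 0 : MvPolynomial (Fin 2) k) ∈ RS k :=
  Algebra.subset_adjoin ⟨0, by simp⟩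

theorem xmul_mem (s : MvPolynomial (Fin 2) k) : X 0 * s ∈ RS k := by
  induction s using MvPolynomial.induction_on' with
  | add p q hp hq => rw [mul_add]; exact add_mem hp hq
  | monomial m a =>
    have hmono : (monomial m) a = C a * (X 0 ^ m 0 * X 1 ^ m 1) := by
      rw [monomial_eq]
      congr 1
      rw [Finsupp.prod_fintype _ _ (fun i => pow_zero _), Fin.prod_univ_two]
    have : X 0 * (monomial m) a = C a * X 0 ^ (m 0) * (X 0 * X 1 ^ (m 1)) := by
      rw [hmono]; ring
    rw [this]
    exact mul_mem (mul_mem ((RS k).algebraMap_mem a) (pow_mem (X0_mem k) _))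
      (Algebra.subset_adjoin ⟨m 1, rfl⟩)

theorem xpow_mem (n : ℕ) (s : MvPolynomial (Fin 2) k) : X 0 ^ (n + 1) * s ∈ RS k := by
  have : X 0 ^ (n + 1) * s = X 0 * (X 0 ^ n * s) := by ring
  rw [this]; exact xmul_mem k _

theorem xpow_mem' (n : ℕ) : (X 0 : MvPolynomial (Fin 2) k) ^ (n + 1) ∈ RS k := by
  simpa using xpow_mem k n 1

theorem mem_decomp {r : MvPolynomial (Fin 2) k} (hr : r ∈ RS k) :
    ∃ c s, r = C c + X 0 * s := by
  induction hr using Algebra.adjoin_induction with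
  | mem x hx => obtain ⟨n, rfl⟩ := hx; exact ⟨0, X 1 ^ n, by simp⟩
  | algebraMap r => exact ⟨r, 0, by simp [MvPolynomial.algebraMap_eq]⟩
  | add x y hx hy ihx ihy =>
    obtain ⟨c1, s1, rfl⟩ := ihx
    obtain ⟨c2, s2, rfl⟩ := ihy
    exact ⟨c1 + c2, s1 + s2, by rw [map_add]; ring⟩
  | mul x y hx hy ihx ihy =>
    obtain ⟨c1, s1, rfl⟩ := ihx
    obtain ⟨c2, s2, rfl⟩ := ihy
    exact ⟨c1 * c2, C c1 * s2 + C c2 * s1 + X 0 * s1 * s2, by rw [map_mul]; ring⟩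

/-- Evaluation at the origin, as an algebra map. -/
noncomputable def ev0 : MvPolynomial (Fin 2) k →ₐ[k] k := aeval 0

theorem ev0_X0 : ev0 k (X 0) = 0 := by simp [ev0]

theorem ev0_xmul (s : MvPolynomial (Fin 2) k) : ev0 k (X 0 * s) = 0 := by
  rw [map_mul, ev0_X0, zero_mul]

theorem ev0_C (c : k) : ev0 k (C c) = c := by simp [ev0]

instance RS_isDomain : IsDomain (RS k) :=
  Function.Injective.isDomain (RS k).val.toRingHom Subtype.val_injective

/-- The ideal `m = x·S` of `R`, as kernel of evaluation at origin. -/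
noncomputable def mI : Ideal (RS k) :=
  RingHom.ker ((ev0 k).comp (RS k).val).toRingHom

theorem mem_mI_iff (r : RS k) : r ∈ mI k ↔ ev0 k (r : MvPolynomial (Fin 2) k) = 0 :=
  RingHom.mem_ker

theorem mI_isPrime : (mI k).IsPrime := RingHom.ker_isPrime _

theorem X0R_mem_mI : (⟨X 0, X0_mem k⟩ : RS k) ∈ mI k := by
  rw [mem_mI_iff]; exact ev0_X0 k

theorem eq_mI_of_X0_mem {p : Ideal (RS k)} (hp : p.IsPrime)
    (hx : (⟨X 0, X0_mem k⟩ : RS k) ∈ p) : p = mI k := by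
  have hle : mI k ≤ p := by
    intro r hr
    obtain ⟨c, s, hcs⟩ := mem_decomp k r.2
    have hc : c = 0 := by
      have h0 := (mem_mI_iff k r).mp hr
      rw [hcs, map_add, ev0_xmul, ev0_C, add_zero] at h0
      exact h0
    subst hc
    rw [map_zero, zero_add] at hcs
    have hsq : r * r = (⟨X 0, X0_mem k⟩ : RS k) * ⟨X 0 * (s * s), xmul_mem k _⟩ := by
      apply Subtype.ext
      show (r : MvPolynomial (Fin 2) k) * (r : MvPolynomial (Fin 2) k)
        = X 0 * (X 0 * (s * s))
      rw [hcs]; ring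
    have h2 : r * r ∈ p := by rw [hsq]; exact Ideal.mul_mem_right _ _ hx
    rcases hp.mem_or_mem h2 with h | h <;> exact h
  refine le_antisymm ?_ hle
  intro r hr
  by_contra hcc
  rw [mem_mI_iff] at hcc
  obtain ⟨c, s, hcs⟩ := mem_decomp k r.2
  have hc : ev0 k (r : MvPolynomial (Fin 2) k) = c := by
    rw [hcs, map_add, ev0_xmul, ev0_C, add_zero]
  have hc0 : c ≠ 0 := fun h => hcc (by rw [hc, h])
  have hxs : (⟨X 0 * s, xmul_mem k s⟩ : RS k) ∈ p := hle ((mem_mI_iff k _).mpr (ev0_xmul k s))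
  have hC : (algebraMap k (RS k) c) ∈ p := by
    have hsub := p.sub_mem hr hxs
    have : r - ⟨X 0 * s, xmul_mem k s⟩ = algebraMap k (RS k) c := by
      apply Subtype.ext
      show (r : MvPolynomial (Fin 2) k) - X 0 * s = algebraMap k (MvPolynomial (Fin 2) k) c
      rw [hcs, MvPolynomial.algebraMap_eq]; ring
    rwa [this] at hsub
  have hunit : IsUnit (algebraMap k (RS k) c) :=
    (isUnit_iff_ne_zero.mpr hc0).map (algebraMap k (RS k))
  exact hp.ne_top (Ideal.eq_top_of_isUnit_mem _ hC hunit)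

/-- Saturation of a prime of `R` to an ideal of `S = k[x,y]`. -/
noncomputable def Qsat (p : Ideal (RS k)) : Ideal (MvPolynomial (Fin 2) k) where
  carrier := {s | ∃ n : ℕ, (⟨X 0 ^ (n + 1) * s, xpow_mem k n s⟩ : RS k) ∈ p}
  zero_mem' := by
    refine ⟨0, ?_⟩
    have : (⟨X 0 ^ (0 + 1) * 0, xpow_mem k 0 0⟩ : RS k) = 0 := Subtype.ext (by simp)
    rw [this]; exact p.zero_mem
  add_mem' := by
    rintro s t ⟨n, hn⟩ ⟨m, hm⟩
    refine ⟨n + m + 1, ?_⟩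
    have : (⟨X 0 ^ (n + m + 1 + 1) * (s + t), xpow_mem k _ _⟩ : RS k)
        = ⟨X 0 ^ (m + 1), xpow_mem' k m⟩ * ⟨X 0 ^ (n + 1) * s, xpow_mem k n s⟩
          + ⟨X 0 ^ (n + 1), xpow_mem' k n⟩ * ⟨X 0 ^ (m + 1) * t, xpow_mem k m t⟩ := by
      apply Subtype.ext
      show X 0 ^ (n + m + 1 + 1) * (s + t)
        = X 0 ^ (m + 1) * (X 0 ^ (n + 1) * s) + X 0 ^ (n + 1) * (X 0 ^ (m + 1) * t)
      ring
    rw [this]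
    exact Ideal.add_mem _ (Ideal.mul_mem_left _ _ hn) (Ideal.mul_mem_left _ _ hm)
  smul_mem' := by
    rintro c s ⟨n, hn⟩
    refine ⟨n + 1, ?_⟩
    have : (⟨X 0 ^ (n + 1 + 1) * (c • s), xpow_mem k _ _⟩ : RS k)
        = ⟨X 0 * c, xmul_mem k c⟩ * ⟨X 0 ^ (n + 1) * s, xpow_mem k n s⟩ := by
      apply Subtype.ext
      show X 0 ^ (n + 1 + 1) * (c * s) = (X 0 * c) * (X 0 ^ (n + 1) * s)
      ring
    rw [this]
    exact Ideal.mul_mem_left _ _ hn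

theorem Qsat_isPrime {p : Ideal (RS k)} (hp : p.IsPrime)
    (hx : (⟨X 0, X0_mem k⟩ : RS k) ∉ p) : (Qsat k p).IsPrime := by
  constructor
  · intro htop
    have h1 : (1 : MvPolynomial (Fin 2) k) ∈ Qsat k p := htop ▸ Submodule.mem_top
    obtain ⟨n, hn⟩ := h1
    have : (⟨X 0 ^ (n + 1) * 1, xpow_mem k n 1⟩ : RS k)
        = (⟨X 0, X0_mem k⟩ : RS k) ^ (n + 1) := Subtype.ext (by push_cast; ring)
    rw [this] at hn
    exact hx (hp.mem_of_pow_mem _ hn)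
  · rintro s t ⟨n, hn⟩
    have key : (⟨X 0 ^ (0 + 1) * s, xpow_mem k 0 s⟩ : RS k)
        * ⟨X 0 ^ (n + 1) * t, xpow_mem k n t⟩
        = (⟨X 0, X0_mem k⟩ : RS k) * ⟨X 0 ^ (n + 1) * (s * t), xpow_mem k n _⟩ := by
      apply Subtype.ext
      show X 0 ^ (0 + 1) * s * (X 0 ^ (n + 1) * t) = X 0 * (X 0 ^ (n + 1) * (s * t))
      ring
    have hmem : (⟨X 0 ^ (0 + 1) * s, xpow_mem k 0 s⟩ : RS k)
        * ⟨X 0 ^ (n + 1) * t, xpow_mem k n t⟩ ∈ p := by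
      rw [key]; exact Ideal.mul_mem_left _ _ hn
    rcases hp.mem_or_mem hmem with h | h
    · exact Or.inl ⟨0, h⟩
    · exact Or.inr ⟨n, h⟩

theorem mem_Qsat_iff {p : Ideal (RS k)} (hp : p.IsPrime)
    (hx : (⟨X 0, X0_mem k⟩ : RS k) ∉ p) (r : RS k) :
    r ∈ p ↔ (r : MvPolynomial (Fin 2) k) ∈ Qsat k p := by
  constructor
  · intro hr
    refine ⟨0, ?_⟩
    have : (⟨X 0 ^ (0 + 1) * (r : MvPolynomial (Fin 2) k), xpow_mem k 0 _⟩ : RS k)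
        = ⟨X 0, X0_mem k⟩ * r := Subtype.ext (by push_cast; ring)
    rw [this]
    exact Ideal.mul_mem_left _ _ hr
  · rintro ⟨n, hn⟩
    have : (⟨X 0 ^ (n + 1) * (r : MvPolynomial (Fin 2) k), xpow_mem k n _⟩ : RS k)
        = (⟨X 0, X0_mem k⟩ : RS k) ^ (n + 1) * r := Subtype.ext (by push_cast; ring)
    rw [this] at hn
    rcases hp.mem_or_mem hn with h | h
    · exact absurd (hp.mem_of_pow_mem _ h) hx
    · exact h

theorem X0_not_mem_Qsat {p : Ideal (RS k)} (hp : p.IsPrime)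
    (hx : (⟨X 0, X0_mem k⟩ : RS k) ∉ p) : (X 0 : MvPolynomial (Fin 2) k) ∉ Qsat k p := by
  intro h
  exact hx ((mem_Qsat_iff k hp hx _).mpr h)

theorem Qsat_ne_bot {p : Ideal (RS k)} (hp : p.IsPrime)
    (hx : (⟨X 0, X0_mem k⟩ : RS k) ∉ p) (hbot : p ≠ ⊥) : Qsat k p ≠ ⊥ := by
  obtain ⟨r, hrp, hr0⟩ := Submodule.exists_mem_ne_zero_of_ne_bot hbot
  refine (Submodule.ne_bot_iff _).mpr ⟨(r : MvPolynomial (Fin 2) k),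
    (mem_Qsat_iff k hp hx r).mp hrp, ?_⟩
  intro h
  exact hr0 (Subtype.ext h)

theorem Qsat_lt_Qsat {p q : Ideal (RS k)} (hp : p.IsPrime) (hq : q.IsPrime)
    (hxp : (⟨X 0, X0_mem k⟩ : RS k) ∉ p) (hxq : (⟨X 0, X0_mem k⟩ : RS k) ∉ q)
    (hlt : p < q) : Qsat k p < Qsat k q := by
  rw [SetLike.lt_iff_le_and_exists]
  constructor
  · rintro s ⟨n, hn⟩
    exact ⟨n, hlt.le hn⟩
  · obtain ⟨g, hg2, hg1⟩ := SetLike.exists_of_lt hlt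
    exact ⟨g, (mem_Qsat_iff k hq hxq g).mp hg2,
      fun h => hg1 ((mem_Qsat_iff k hp hxp g).mpr h)⟩

theorem aeval_X0_mem_RS (P : Polynomial k) :
    Polynomial.aeval (X (0 : Fin 2)) P ∈ RS k := by
  have h := Polynomial.aeval_mem_adjoin_singleton k (X (0 : Fin 2) : MvPolynomial (Fin 2) k)
    (p := P)
  refine Algebra.adjoin_le ?_ h
  intro t ht
  rw [Set.mem_singleton_iff] at ht
  rw [ht]
  exact X0_mem k

theorem ev0_aeval_X0 (P : Polynomial k) :
    ev0 k (Polynomial.aeval (X (0 : Fin 2)) P) = P.coeff 0 := by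
  rw [← Polynomial.aeval_algHom_apply (ev0 k) (X 0) P, ev0_X0]
  rw [Polynomial.aeval_def, Polynomial.eval₂_at_zero]
  simp

theorem no_chain {p0 p1 p2 p3 : Ideal (RS k)} (h0 : p0.IsPrime) (h1 : p1.IsPrime)
    (h2 : p2.IsPrime) (h3 : p3.IsPrime)
    (l01 : p0 < p1) (l12 : p1 < p2) (l23 : p2 < p3) : False := by
  have hx2 : (⟨X 0, X0_mem k⟩ : RS k) ∉ p2 := by
    intro h
    have e2 := eq_mI_of_X0_mem k h2 h
    have e3 := eq_mI_of_X0_mem k h3 (l23.le h)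
    exact l23.ne (e2.trans e3.symm)
  have hx1 : (⟨X 0, X0_mem k⟩ : RS k) ∉ p1 := fun h => hx2 (l12.le h)
  have hp1bot : p1 ≠ ⊥ := by
    intro hb
    rw [hb] at l01
    exact (not_lt_bot l01)
  have hq1p := Qsat_isPrime k h1 hx1
  have hq2p := Qsat_isPrime k h2 hx2
  have hq1bot := Qsat_ne_bot k h1 hx1 hp1bot
  have hq12 := Qsat_lt_Qsat k h1 h2 hx1 hx2 l12
  have hmax : (Qsat k p2).IsMaximal := isMaximal_of_chain k hq1p hq2p hq1bot hq12
  by_cases hx3 : (⟨X 0, X0_mem k⟩ : RS k) ∈ p3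
  · -- p3 = m; use the minimal polynomial of x mod Qsat p2
    have h3m := eq_mI_of_X0_mem k h3 hx3
    haveI : (Qsat k p2).IsPrime := hq2p
    set q2 := Qsat k p2
    set D := MvPolynomial (Fin 2) k ⧸ q2
    let mk : MvPolynomial (Fin 2) k →ₐ[k] D := Ideal.Quotient.mkₐ k q2
    obtain ⟨d, hd0, hdq⟩ := exists_const_X0 k hq1p hq2p hq1bot hq12
    have hzint : IsIntegral k (mk (X 0)) := by
      refine (IsAlgebraic.isIntegral ⟨d, hd0, ?_⟩)
      rw [Polynomial.aeval_algHom_apply mk (X 0) d]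
      exact Ideal.Quotient.eq_zero_iff_mem.mpr hdq
    have hz0 : mk (X 0) ≠ 0 := by
      intro h
      exact X0_not_mem_Qsat k h2 hx2 (Ideal.Quotient.eq_zero_iff_mem.mp h)
    set P := minpoly k (mk (X 0))
    have hc0 : P.coeff 0 ≠ 0 := minpoly.coeff_zero_ne_zero hzint hz0
    have hw : Polynomial.aeval (X (0 : Fin 2)) P ∈ q2 := by
      rw [← Ideal.Quotient.eq_zero_iff_mem]
      have : (Ideal.Quotient.mk q2) (Polynomial.aeval (X (0 : Fin 2)) P)
          = mk (Polynomial.aeval (X (0 : Fin 2)) P) := rfl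
      rw [this, ← Polynomial.aeval_algHom_apply mk (X 0) P]
      exact minpoly.aeval k (mk (X 0))
    have hwp2 : (⟨Polynomial.aeval (X (0 : Fin 2)) P, aeval_X0_mem_RS k P⟩ : RS k) ∈ p2 :=
      (mem_Qsat_iff k h2 hx2 _).mpr hw
    have hwm : (⟨Polynomial.aeval (X (0 : Fin 2)) P, aeval_X0_mem_RS k P⟩ : RS k) ∈ mI k :=
      h3m ▸ l23.le hwp2
    rw [mem_mI_iff] at hwm
    rw [ev0_aeval_X0] at hwm
    exact hc0 hwm
  · have hq3p := Qsat_isPrime k h3 hx3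
    have hq23 := Qsat_lt_Qsat k h2 h3 hx2 hx3 l23
    exact hq3p.ne_top (hmax.1.2 _ hq23)

end Stmt4Aux

open Stmt4Aux in
/-- For a field `k`, `S = k[x,y]`, the subalgebra `R = k + xS` has Krull
dimension 2. -/
theorem stmt_4 (k : Type*) [Field k] :
    ringKrullDim
      (Algebra.adjoin k {f : MvPolynomial (Fin 2) k | ∃ n : ℕ, f = X 0 * X 1 ^ n}) = 2 := by
  show ringKrullDim (RS k) = 2
  have hnontriv : Nontrivial (RS k) := inferInstance
  refine le_antisymm ?_ ?_
  · -- upper bound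
    have upper : ∀ l : LTSeries (PrimeSpectrum (RS k)), l.length ≤ 2 := by
      intro l
      by_contra hlen
      push_neg at hlen
      have hm := l.strictMono
      have i0 : (⟨0, by omega⟩ : Fin (l.length + 1)) < ⟨1, by omega⟩ := by
        simp [Fin.lt_def]
      have i1 : (⟨1, by omega⟩ : Fin (l.length + 1)) < ⟨2, by omega⟩ := by
        simp [Fin.lt_def]
      have i2 : (⟨2, by omega⟩ : Fin (l.length + 1)) < ⟨3, by omega⟩ := by
        simp [Fin.lt_def]
      have a0 := l.toFun ⟨0, by omega⟩
      exact no_chain k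
        (l.toFun ⟨0, by omega⟩).isPrime (l.toFun ⟨1, by omega⟩).isPrime
        (l.toFun ⟨2, by omega⟩).isPrime (l.toFun ⟨3, by omega⟩).isPrime
        ((PrimeSpectrum.asIdeal_lt_asIdeal _ _).mpr (hm i0))
        ((PrimeSpectrum.asIdeal_lt_asIdeal _ _).mpr (hm i1))
        ((PrimeSpectrum.asIdeal_lt_asIdeal _ _).mpr (hm i2))
    rw [ringKrullDim, Order.krullDim_eq_iSup_length]
    have hsup : (⨆ p : LTSeries (PrimeSpectrum (RS k)), (p.length : ℕ∞)) ≤ (2 : ℕ∞) :=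
      iSup_le fun l => by exact_mod_cast upper l
    have h2 : ((⨆ p : LTSeries (PrimeSpectrum (RS k)), (p.length : ℕ∞) : ℕ∞) : WithBot ℕ∞)
        ≤ ((2 : ℕ∞) : WithBot ℕ∞) := WithBot.coe_le_coe.mpr hsup
    simpa using h2
  · -- lower bound: chain ⊥ < P1 < P2
    classical
    let α : MvPolynomial (Fin 2) k →ₐ[k] Polynomial k := aeval ![Polynomial.X, 0]
    let β : MvPolynomial (Fin 2) k →ₐ[k] k := aeval 0
    let P1 : Ideal (RS k) := RingHom.ker (α.comp (RS k).val).toRingHom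
    let P2 : Ideal (RS k) := RingHom.ker (β.comp (RS k).val).toRingHom
    have hP1 : P1.IsPrime := RingHom.ker_isPrime _
    have hP2 : P2.IsPrime := RingHom.ker_isPrime _
    have hbotP : (⊥ : Ideal (RS k)).IsPrime := Ideal.bot_prime
    have hmem1 : ∀ r : RS k, r ∈ P1 ↔ α (r : MvPolynomial (Fin 2) k) = 0 := fun r =>
      RingHom.mem_ker
    have hmem2 : ∀ r : RS k, r ∈ P2 ↔ β (r : MvPolynomial (Fin 2) k) = 0 := fun r =>
      RingHom.mem_ker
    have h01 : (⊥ : Ideal (RS k)) < P1 := by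
      rw [bot_lt_iff_ne_bot]
      refine (Submodule.ne_bot_iff _).mpr ⟨⟨X 0 * X 1, xmul_mem k (X 1)⟩, ?_, ?_⟩
      · rw [hmem1]
        show α (X 0 * X 1) = 0
        rw [map_mul]
        have hX1 : α (X 1) = 0 := by simp [α]
        rw [hX1, mul_zero]
      · intro h
        have : (X 0 * X 1 : MvPolynomial (Fin 2) k) = 0 := congrArg Subtype.val h
        exact (mul_ne_zero (X_ne_zero 0) (X_ne_zero 1)) this
    have hcomp : ∀ s, β s = Polynomial.aeval (0 : k) (α s) := by
      have : β = (Polynomial.aeval (0 : k)).comp α := by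
        apply MvPolynomial.algHom_ext
        intro i
        fin_cases i
        · show β (X 0) = Polynomial.aeval (0 : k) (α (X 0))
          have h1 : α (X 0) = Polynomial.X := by simp [α]
          have h2 : β (X 0) = 0 := by simp [β]
          rw [h1, h2, Polynomial.aeval_X]
        · show β (X 1) = Polynomial.aeval (0 : k) (α (X 1))
          have h1 : α (X 1) = 0 := by simp [α]
          have h2 : β (X 1) = 0 := by simp [β]
          rw [h1, h2, map_zero]
      intro s; rw [this]; rfl
    have h12 : P1 < P2 := by
      rw [SetLike.lt_iff_le_and_exists]
      constructor
      · intro r hr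
        rw [hmem1] at hr
        rw [hmem2, hcomp, hr, map_zero]
      · refine ⟨⟨X 0, X0_mem k⟩, ?_, ?_⟩
        · rw [hmem2]
          show β (X 0) = 0
          simp [β]
        · rw [hmem1]
          show ¬ α (X 0) = 0
          have h1 : α (X 0) = Polynomial.X := by simp [α]
          rw [h1]
          exact Polynomial.X_ne_zero
    let c : LTSeries (PrimeSpectrum (RS k)) :=
      { length := 2
        toFun := ![⟨⊥, hbotP⟩, ⟨P1, hP1⟩, ⟨P2, hP2⟩]
        step := by
          intro i
          fin_cases i
          · show (⟨⊥, hbotP⟩ : PrimeSpectrum (RS k)) < ⟨P1, hP1⟩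
            rw [← PrimeSpectrum.asIdeal_lt_asIdeal]
            exact h01
          · show (⟨P1, hP1⟩ : PrimeSpectrum (RS k)) < ⟨P2, hP2⟩
            rw [← PrimeSpectrum.asIdeal_lt_asIdeal]
            exact h12 }
    have := Order.LTSeries.length_le_krullDim c
    rw [ringKrullDim]
    exact_mod_cast this
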